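/- Let M^O = [[0, −1], [1, 0]], M^L = [[0, 0], [0, −√2]], M^R = [[√2, 0], [0, 0]] be the 2×2 complex matrices defining the exact scar state |Φ₁⟩ of the PXP chain. Then for every n ≥ 1 and every word (s_1, …, s_n) ∈ {O, L, R}^n, Σ_{k=1}^{n} Tr(M^{s_1} ⋯ M^{s_{k−1}} · F^{s_k} · M^{s_{k+1}} ⋯ M^{s_n}) = 0, where F^O = M^L + M^R and F^L = F^R = M^O. (Hence |Φ₁⟩ is annihilated by the on-site Hamiltonian H1 and is an exact E = 0 eigenstate of the periodic PXP chain.) -/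

import Mathlib

open Matrix

/-- The blocked three-letter alphabet `{O, L, R}`. -/
inductive Blk | O | L | R
deriving DecidableEq

/-- The MPS tensors of the exact scar state `|Φ₁⟩` of the PXP chain. -/
noncomputable def MPhi1 : Blk → Matrix (Fin 2) (Fin 2) ℂ
  | .O => !![0, -1; 1, 0]
  | .L => !![0, 0; 0, -(Real.sqrt 2 : ℂ)]
  | .R => !![(Real.sqrt 2 : ℂ), 0; 0, 0]

/-- The defect matrices: `F^O = M^L + M^R`, `F^L = F^R = M^O`. -/
noncomputable def FPhi1 : Blk → Matrix (Fin 2) (Fin 2) ℂ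
  | .O => MPhi1 .L + MPhi1 .R
  | .L => MPhi1 .O
  | .R => MPhi1 .O

/-- The gauge matrix `(√2/2) σˣ` whose commutator generates the defects. -/
noncomputable def QPhi1 : Matrix (Fin 2) (Fin 2) ℂ :=
  !![0, (Real.sqrt 2 : ℂ)/2; (Real.sqrt 2 : ℂ)/2, 0]

lemma sqrt2_sq : ((Real.sqrt 2 : ℂ)) * ((Real.sqrt 2 : ℂ)) = 2 := by
  norm_cast
  exact Real.mul_self_sqrt (by norm_num)

lemma FPhi1_eq_comm (b : Blk) :
    FPhi1 b = QPhi1 * MPhi1 b - MPhi1 b * QPhi1 := by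
  cases b <;>
    simp only [FPhi1, MPhi1, QPhi1] <;>
    ext i j <;>
    fin_cases i <;> fin_cases j <;>
    simp [Matrix.mul_apply, Fin.sum_univ_two] <;>
    field_simp <;>
    ring_nf <;>
    rw [show ((Real.sqrt 2 : ℂ))^2 = 2 by rw [sq]; exact sqrt2_sq] <;> ring

/-- for the `|Φ₁⟩` MPS tensors, the sum over all single-defect
insertion amplitudes vanishes for every word, hence `|Φ₁⟩` is an exact `E = 0`
eigenstate of the periodic PXP chain. -/
theorem Phi1_insertion_sum_eq_zero
    (n : ℕ) (hn : 1 ≤ n) (s : Fin n → Blk) :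
    ∑ k : Fin n,
      Matrix.trace ((List.ofFn fun j : Fin n =>
        if j = k then FPhi1 (s j) else MPhi1 (s j)).prod) = 0 := by
  set l : List (Matrix (Fin 2) (Fin 2) ℂ) := List.ofFn fun j => MPhi1 (s j) with hl
  have hlen : l.length = n := by simp [hl]
  -- the inserted list is `l.set k (FPhi1 (s k))`
  have hset : ∀ k : Fin n,
      (List.ofFn fun j : Fin n =>
        if j = k then FPhi1 (s j) else MPhi1 (s j)) = l.set k (FPhi1 (s k)) := by
    intro k
    apply List.ext_getElem (by simp [hl])
    intro i h1 h2
    simp only [hl, List.getElem_ofFn, List.getElem_set]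
    have h1' : i < n := by simpa using h1
    by_cases hik : i = (k : ℕ)
    · subst hik
      simp [Fin.ext_iff]
    · rw [if_neg (Ne.symm hik), if_neg (by simpa [Fin.ext_iff] using hik)]
  -- telescoping function
  set f : ℕ → ℂ := fun k =>
    Matrix.trace ((l.take k).prod * QPhi1 * (l.drop k).prod) with hf
  have hterm : ∀ k : Fin n,
      Matrix.trace ((l.set k (FPhi1 (s k))).prod) = f k - f (k + 1) := by
    intro k
    have hk : (k : ℕ) < l.length := by rw [hlen]; exact k.isLt
    rw [List.prod_set, if_pos hk, FPhi1_eq_comm]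
    have hA : l[(k : ℕ)] = MPhi1 (s k) := by
      simp [hl]
    have hdrop : l.drop (k : ℕ) = l[(k : ℕ)] :: l.drop ((k : ℕ) + 1) :=
      List.drop_eq_getElem_cons hk
    have htake : (l.take ((k : ℕ) + 1)).prod = (l.take (k : ℕ)).prod * l[(k : ℕ)] :=
      List.prod_take_succ l (k : ℕ) hk
    simp only [hf, hdrop, htake, List.prod_cons, hA]
    rw [Matrix.mul_sub, Matrix.sub_mul, Matrix.trace_sub]
    ring_nf
    simp [mul_assoc]
  calc ∑ k : Fin n,
        Matrix.trace ((List.ofFn fun j : Fin n =>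
          if j = k then FPhi1 (s j) else MPhi1 (s j)).prod)
      = ∑ k : Fin n, (f k - f (k + 1)) := by
        refine Finset.sum_congr rfl fun k _ => ?_
        rw [hset k, hterm k]
    _ = ∑ k ∈ Finset.range n, (f k - f (k + 1)) := by
        rw [Fin.sum_univ_eq_sum_range (fun m => f m - f (m + 1)) n]
    _ = f 0 - f n := Finset.sum_range_sub' f n
    _ = 0 := by
        have h1 : l.take n = l := by rw [← hlen]; exact List.take_length
        have h2 : l.drop n = [] := by rw [← hlen]; exact List.drop_length
        simp only [hf, List.take_zero, List.drop_zero, List.prod_nil, h1, h2,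
          Matrix.one_mul, Matrix.mul_one]
        rw [Matrix.trace_mul_comm, sub_self]
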